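/- arXiv:2004.13541 — 9 statements merged into one kernel-verified Lean document; each statement's English description precedes it below -/
import Mathlib

section
/- Let (Ω, F, P) be a probability space and X : Ω → [0, ∞) an F-measurable function (finite everywhere). Let (aₙ) be a sequence of positive reals such that aₙ⁻¹ → 0 and ∑ₙ aₙ⁻¹ = ∞. Define A₁ := {X ≥ a₁⁻¹} and inductively Aₙ := {X ≥ aₙ⁻¹ + ∑_{j<n} a_j⁻¹ · 1_{A_j}}. Then X(ω) = ∑ₙ aₙ⁻¹ · 1_{Aₙ}(ω) for every ω ∈ Ω. -/
open MeasureTheory Filter Topology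

noncomputable def partialS (X : Ω → ℝ) (a : ℕ → ℝ) : ℕ → Ω → ℝ
  | 0, _ => 0
  | (n+1), ω => partialS X a n ω + (a n)⁻¹ * (if (a n)⁻¹ + partialS X a n ω ≤ X ω then 1 else 0)

/-- `Aset X a n` is the set `Aₙ₊₁ = {X ≥ aₙ₊₁⁻¹ + ∑_{j<n+1} a_j⁻¹ 1_{A_j}}` (0-indexed). -/
noncomputable def Aset (X : Ω → ℝ) (a : ℕ → ℝ) (n : ℕ) : Set Ω :=
  {ω | (a n)⁻¹ + partialS X a n ω ≤ X ω}

theorem stmt0 {Ω : Type*} [MeasurableSpace Ω] (P : Measure Ω) [IsProbabilityMeasure P]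
    (X : Ω → ℝ) (hX : Measurable X) (hX0 : ∀ ω, 0 ≤ X ω)
    (a : ℕ → ℝ) (ha : ∀ n, 0 < a n)
    (hvan : Tendsto (fun n => (a n)⁻¹) atTop (𝓝 0))
    (hdiv : ¬ Summable (fun n => (a n)⁻¹)) :
    ∀ ω, HasSum (fun n => (a n)⁻¹ * (Aset X a n).indicator (1 : Ω → ℝ) ω) (X ω) := by
  intro ω
  set S : ℕ → ℝ := fun n => partialS X a n ω with hS
  have hterm : ∀ n, (a n)⁻¹ * (Aset X a n).indicator (1 : Ω → ℝ) ω = S (n + 1) - S n := by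
    intro n
    simp only [hS, partialS, Set.indicator, Aset, Set.mem_setOf_eq, Pi.one_apply]
    ring
  have hinc_nonneg : ∀ n, 0 ≤ a n := fun n => (ha n).le
  have hnonneg : ∀ n, 0 ≤ (a n)⁻¹ * (Aset X a n).indicator (1 : Ω → ℝ) ω := by
    intro n
    apply mul_nonneg (inv_nonneg.mpr (hinc_nonneg n))
    exact Set.indicator_nonneg (fun _ _ => zero_le_one) ω
  have hmono : Monotone S := by
    apply monotone_nat_of_le_succ
    intro n
    have := hnonneg n
    rw [hterm n] at this
    linarith
  have hle : ∀ n, S n ≤ X ω := by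
    intro n
    induction n with
    | zero => simpa [hS, partialS] using hX0 ω
    | succ n ih =>
      simp only [hS, partialS]
      split_ifs with h
      · linarith
      · simpa using ih
  -- partial sums equal S
  have hsum : ∀ n, ∑ i ∈ Finset.range n, (a i)⁻¹ * (Aset X a i).indicator (1 : Ω → ℝ) ω = S n := by
    intro n
    induction n with
    | zero => simp [hS, partialS]
    | succ n ih => rw [Finset.sum_range_succ, ih, hterm n]; ring
  -- S converges to its sup
  have hbdd : BddAbove (Set.range S) := ⟨X ω, by rintro x ⟨n, rfl⟩; exact hle n⟩
  set L := ⨆ n, S n with hLdef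
  have hSL : Tendsto S atTop (𝓝 L) := tendsto_atTop_ciSup hmono hbdd
  have hLle : L ≤ X ω := ciSup_le hle
  have hSleL : ∀ n, S n ≤ L := fun n => le_ciSup hbdd n
  have hLX : L = X ω := by
    by_contra hne
    have hLlt : L < X ω := lt_of_le_of_ne hLle hne
    have hε : (0:ℝ) < X ω - L := by linarith
    obtain ⟨N, hN⟩ := (hvan.eventually (eventually_le_nhds hε)).exists_forall_of_atTop
    -- for n ≥ N, condition holds so S (n+1) = S n + (a n)⁻¹
    have hstep : ∀ n ≥ N, S (n + 1) = S n + (a n)⁻¹ := by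
      intro n hn
      have hcond : (a n)⁻¹ + S n ≤ X ω := by
        have := hN n hn
        have := hSleL n
        linarith
      simp only [hS, partialS]
      rw [if_pos hcond]; ring
    have key : ∀ m, S (N + m) = S N + (∑ i ∈ Finset.range (N + m), (a i)⁻¹
        - ∑ i ∈ Finset.range N, (a i)⁻¹) := by
      intro m
      induction m with
      | zero => simp
      | succ m ih =>
        have : N + (m + 1) = (N + m) + 1 := by ring
        rw [this, hstep (N + m) (Nat.le_add_right N m), ih, Finset.sum_range_succ]
        ring
    have hdivT : Tendsto (fun n => ∑ i ∈ Finset.range n, (a i)⁻¹) atTop atTop :=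
      (not_summable_iff_tendsto_nat_atTop_of_nonneg
        (fun n => inv_nonneg.mpr (hinc_nonneg n))).mp hdiv
    obtain ⟨n, hn⟩ := (hdivT.eventually_ge_atTop
      (X ω + 1 - S N + ∑ i ∈ Finset.range N, (a i)⁻¹)).exists_forall_of_atTop
    have h1 := hn (N + max n N) (le_trans (le_max_left n N) (Nat.le_add_left _ _))
    have h2 := key (max n N)
    have h3 := hle (N + max n N)
    linarith
  rw [(hasSum_iff_tendsto_nat_of_nonneg hnonneg _)]
  simpa [hsum, hLX] using hSL
end

section
/- Let (Ω, F, P) be a probability space, X : Ω → [0, ∞) measurable and finite everywhere, and (aₙ) positive reals with aₙ⁻¹ → 0 and ∑ aₙ⁻¹ = ∞. With Aₙ defined inductively as A₁ = {X ≥ a₁⁻¹}, Aₙ = {X ≥ aₙ⁻¹ + ∑_{j<n} a_j⁻¹ 1_{A_j}}, for every ω ∈ Ω there are infinitely many n with ω ∉ Aₙ. -/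
open MeasureTheory Filter Topology

theorem stmt2 {Ω : Type*} [MeasurableSpace Ω] (P : Measure Ω) [IsProbabilityMeasure P]
    (X : Ω → ℝ) (hX : Measurable X) (hX0 : ∀ ω, 0 ≤ X ω)
    (a : ℕ → ℝ) (ha : ∀ n, 0 < a n)
    (hvan : Tendsto (fun n => (a n)⁻¹) atTop (𝓝 0))
    (hdiv : ¬ Summable (fun n => (a n)⁻¹)) :
    ∀ ω, {n : ℕ | ω ∉ Aset X a n}.Infinite := by
  intro ω
  have hle : ∀ n, partialS X a n ω ≤ X ω := by
    intro n
    induction n with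
    | zero => simpa [partialS] using hX0 ω
    | succ n ih =>
      simp only [partialS]
      split_ifs with h
      · linarith
      · simpa using ih
  by_contra hfin
  rw [Set.not_infinite] at hfin
  obtain ⟨N, hN⟩ := hfin.bddAbove
  have hmem : ∀ n, N < n → (a n)⁻¹ + partialS X a n ω ≤ X ω := by
    intro n hn
    by_contra h
    exact absurd (hN h) (not_le.mpr hn)
  have hstep : ∀ k, partialS X a (N + 1 + k) ω
      = partialS X a (N + 1) ω + ∑ j ∈ Finset.range k, (a (N + 1 + j))⁻¹ := by
    intro k
    induction k with
    | zero => simp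
    | succ k ih =>
      have hm := hmem (N + 1 + k) (by omega)
      show partialS X a (N + 1 + k) ω + (a (N + 1 + k))⁻¹ *
          (if (a (N + 1 + k))⁻¹ + partialS X a (N + 1 + k) ω ≤ X ω then 1 else 0) = _
      rw [if_pos hm, mul_one, ih, Finset.sum_range_succ]
      ring
  have hns : ¬ Summable (fun j => (a (N + 1 + j))⁻¹) := by
    intro h
    apply hdiv
    have h2 : Summable fun j => (a (j + (N + 1)))⁻¹ := by
      refine h.congr fun j => ?_
      rw [add_comm]
    exact ((summable_nat_add_iff (f := fun n => (a n)⁻¹) (N + 1))).mp h2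
  have htend : Tendsto (fun k => ∑ j ∈ Finset.range k, (a (N + 1 + j))⁻¹) atTop atTop := by
    rw [← not_summable_iff_tendsto_nat_atTop_of_nonneg (fun j => inv_nonneg.mpr (ha _).le)]
    exact hns
  obtain ⟨k, hk⟩ := (htend.eventually_gt_atTop (X ω - partialS X a (N + 1) ω)).exists
  have := hle (N + 1 + k)
  rw [hstep k] at this
  linarith
end

section
/- Let (Ω, F, P) be a probability space and X : Ω → [0, ∞) an integrable (L¹) random variable. Let (aₙ) be positive reals with aₙ⁻¹ → 0 and ∑ aₙ⁻¹ = ∞, and set Hₙ(a) := ∑_{j=1}^n a_j⁻¹. Then ∑_{n=1}^∞ aₙ⁻¹ · P(X ≥ Hₙ(a)) ≤ E[X]. -/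
open MeasureTheory Filter Topology

theorem stmt3 {Ω : Type*} [MeasurableSpace Ω] (P : Measure Ω) [IsProbabilityMeasure P]
    (X : Ω → ℝ) (hX0 : ∀ ω, 0 ≤ X ω) (hint : Integrable X P)
    (a : ℕ → ℝ) (ha : ∀ n, 0 < a n)
    (hvan : Tendsto (fun n => (a n)⁻¹) atTop (𝓝 0))
    (hdiv : ¬ Summable (fun n => (a n)⁻¹)) :
    ∑' n : ℕ, ENNReal.ofReal (a n)⁻¹ *
        P {ω | ∑ j ∈ Finset.range (n + 1), (a j)⁻¹ ≤ X ω}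
      ≤ ENNReal.ofReal (∫ ω, X ω ∂P) := by
  set H : ℕ → ℝ := fun n => ∑ j ∈ Finset.range n, (a j)⁻¹ with hH
  have hHmono : Monotone H := by
    intro m n hmn
    exact Finset.sum_le_sum_of_subset_of_nonneg (Finset.range_subset_range.2 hmn)
      (fun j _ _ => (inv_pos.2 (ha j)).le)
  have hH0 : ∀ n, 0 ≤ H n := fun n => Finset.sum_nonneg fun j _ => (inv_pos.2 (ha j)).le
  set g : ℝ → ENNReal := fun t => P {ω | t ≤ X ω} with hg
  have hganti : Antitone g := fun s t hst => measure_mono fun ω h => hst.trans h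
  have hgm : Measurable g := hganti.measurable
  -- rewrite RHS via layer cake
  rw [MeasureTheory.ofReal_integral_eq_lintegral_ofReal hint (Filter.Eventually.of_forall hX0),
    lintegral_eq_lintegral_meas_le P (Filter.Eventually.of_forall hX0) hint.aemeasurable]
  -- each term equals the integral of the constant over Ioc (H n) (H (n+1))
  have hterm : ∀ n : ℕ, ENNReal.ofReal (a n)⁻¹ * P {ω | H (n+1) ≤ X ω}
      ≤ ∫⁻ t in Set.Ioc (H n) (H (n+1)), g t := by
    intro n
    have hvol : (volume (Set.Ioc (H n) (H (n+1)))) = ENNReal.ofReal (a n)⁻¹ := by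
      rw [Real.volume_Ioc]
      congr 1
      simp [hH, Finset.sum_range_succ]
    calc ENNReal.ofReal (a n)⁻¹ * P {ω | H (n+1) ≤ X ω}
        = ∫⁻ _ in Set.Ioc (H n) (H (n+1)), g (H (n+1)) := by
          rw [setLIntegral_const, hvol, mul_comm]
      _ ≤ ∫⁻ t in Set.Ioc (H n) (H (n+1)), g t := by
          apply setLIntegral_mono hgm
          intro t ht
          exact hganti ht.2
  have hsum : ∑' n : ℕ, ENNReal.ofReal (a n)⁻¹ * P {ω | H (n+1) ≤ X ω}
      ≤ ∑' n : ℕ, ∫⁻ t in Set.Ioc (H n) (H (n+1)), g t := ENNReal.tsum_le_tsum hterm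
  refine hsum.trans ?_
  have hdisj : Pairwise (Function.onFun Disjoint (fun n => Set.Ioc (H n) (H (n+1)))) := by
    intro i j hij
    apply Set.Ioc_disjoint_Ioc.2
    rcases hij.lt_or_gt with h | h
    · exact (min_le_left _ _).trans ((hHmono h).trans (le_max_right _ _))
    · exact (min_le_right _ _).trans ((hHmono h).trans (le_max_left _ _))
  rw [← lintegral_iUnion (fun n => measurableSet_Ioc) hdisj]
  apply lintegral_mono_set
  intro t ht
  rcases Set.mem_iUnion.1 ht with ⟨n, hn⟩
  exact lt_of_le_of_lt (hH0 n) hn.1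
end

section
/- Let (Ω, F, P) be a probability space, X : Ω → [0, ∞) integrable, and (aₙ) positive reals with aₙ⁻¹ → 0 and ∑ aₙ⁻¹ = ∞. With Aₙ defined inductively by A₁ = {X ≥ a₁⁻¹}, Aₙ = {X ≥ aₙ⁻¹ + ∑_{j<n} a_j⁻¹ 1_{A_j}}, one has E[X] = ∑_{n=1}^∞ aₙ⁻¹ · P(Aₙ), and this series converges (is finite). -/
open MeasureTheory Filter Topology

section Aux

variable {Ω' : Type*} {X Y : Ω' → ℝ} {a : ℕ → ℝ} {ω : Ω'}

lemma pS_congr (h : X ω = Y ω) : ∀ n, partialS X a n ω = partialS Y a n ω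
  | 0 => rfl
  | (n+1) => by simp [partialS, pS_congr h n, h]

lemma pS_le (ha : ∀ n, 0 < a n) (h0 : 0 ≤ X ω) : ∀ n, partialS X a n ω ≤ X ω
  | 0 => h0
  | (n+1) => by
      by_cases h : (a n)⁻¹ + partialS X a n ω ≤ X ω
      · simp only [partialS, if_pos h, mul_one]
        linarith
      · simpa [partialS, if_neg h] using pS_le ha h0 n

lemma pS_mono (ha : ∀ n, 0 < a n) : Monotone (fun n => partialS X a n ω) := by
  apply monotone_nat_of_le_succ
  intro n
  have h1 : 0 ≤ (a n)⁻¹ * (if (a n)⁻¹ + partialS X a n ω ≤ X ω then (1:ℝ) else 0) := by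
    apply mul_nonneg (inv_pos.mpr (ha n)).le
    split <;> norm_num
  simp only [partialS]
  linarith

lemma pS_nonneg (ha : ∀ n, 0 < a n) (n : ℕ) : 0 ≤ partialS X a n ω :=
  pS_mono ha (Nat.zero_le n)

lemma pS_tendsto (ha : ∀ n, 0 < a n)
    (hvan : Tendsto (fun n => (a n)⁻¹) atTop (𝓝 0))
    (hdiv : ¬ Summable (fun n => (a n)⁻¹)) (h0 : 0 ≤ X ω) :
    Tendsto (fun n => partialS X a n ω) atTop (𝓝 (X ω)) := by
  have hbdd : BddAbove (Set.range fun n => partialS X a n ω) := by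
    refine ⟨X ω, ?_⟩
    rintro x ⟨n, rfl⟩
    exact pS_le ha h0 n
  set L := ⨆ n, partialS X a n ω with hL
  have hlim : Tendsto (fun n => partialS X a n ω) atTop (𝓝 L) :=
    tendsto_atTop_ciSup (pS_mono ha) hbdd
  have hLle : L ≤ X ω := ciSup_le fun n => pS_le ha h0 n
  rcases eq_or_lt_of_le hLle with h | h
  · rwa [h] at hlim
  · exfalso
    have hev : ∀ᶠ n in atTop, (a n)⁻¹ < X ω - L :=
      hvan.eventually_lt_const (by linarith)
    obtain ⟨N, hN⟩ := eventually_atTop.mp hev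
    have key : ∀ k, partialS X a (N + k) ω
        = partialS X a N ω + ∑ j ∈ Finset.range k, (a (N + j))⁻¹ := by
      intro k
      induction k with
      | zero => simp
      | succ k ih =>
        have hle : partialS X a (N + k) ω ≤ L := le_ciSup hbdd (N + k)
        have hak : (a (N + k))⁻¹ < X ω - L := hN (N + k) (Nat.le_add_right _ _)
        have hcond : (a (N + k))⁻¹ + partialS X a (N + k) ω ≤ X ω := by linarith
        have : N + (k + 1) = (N + k) + 1 := rfl
        rw [this]
        simp only [partialS, if_pos hcond, mul_one]
        rw [ih, Finset.sum_range_succ]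
        ring
    have hsum : Summable (fun j => (a (N + j))⁻¹) := by
      apply summable_of_sum_range_le (c := X ω - partialS X a N ω)
        (fun j => (inv_pos.mpr (ha _)).le)
      intro k
      have h1 := pS_le ha h0 (N + k)
      rw [key k] at h1
      linarith
    apply hdiv
    rw [← summable_nat_add_iff N]
    exact hsum.congr fun j => by rw [Nat.add_comm]

end Aux

section Meas

open scoped ENNReal
variable {Ω' : Type*} [MeasurableSpace Ω'] {X : Ω' → ℝ} {a : ℕ → ℝ}

lemma pS_meas (hX : Measurable X) : ∀ n, Measurable (partialS X a n)
  | 0 => measurable_const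
  | (n+1) => by
      have h1 := pS_meas hX n
      have hs : MeasurableSet {ω | (a n)⁻¹ + partialS X a n ω ≤ X ω} :=
        measurableSet_le (measurable_const.add h1) hX
      exact h1.add (measurable_const.mul (Measurable.ite hs measurable_const measurable_const))

lemma Aset_meas (hX : Measurable X) (n : ℕ) : MeasurableSet (Aset X a n) :=
  measurableSet_le (measurable_const.add (pS_meas hX n)) hX

lemma main_meas (P : Measure Ω') (hXm : Measurable X) (hX0 : ∀ ω, 0 ≤ X ω)
    (ha : ∀ n, 0 < a n)
    (hvan : Tendsto (fun n => (a n)⁻¹) atTop (𝓝 0))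
    (hdiv : ¬ Summable (fun n => (a n)⁻¹)) :
    ∫⁻ ω, ENNReal.ofReal (X ω) ∂P
      = ∑' n : ℕ, ENNReal.ofReal (a n)⁻¹ * P (Aset X a n) := by
  set g : ℕ → Ω' → ENNReal :=
    fun n => (Aset X a n).indicator (fun _ => ENNReal.ofReal (a n)⁻¹) with hg
  have hpart : ∀ ω n, ∑ j ∈ Finset.range n, g j ω = ENNReal.ofReal (partialS X a n ω) := by
    intro ω n
    induction n with
    | zero => simp [partialS]
    | succ n ih =>
      rw [Finset.sum_range_succ, ih]
      by_cases h : ω ∈ Aset X a n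
      · have h' : (a n)⁻¹ + partialS X a n ω ≤ X ω := h
        rw [hg]
        simp only [Set.indicator_of_mem h, partialS, if_pos h', mul_one]
        rw [ENNReal.ofReal_add (pS_nonneg ha n) (inv_pos.mpr (ha n)).le]
      · have h' : ¬ ((a n)⁻¹ + partialS X a n ω ≤ X ω) := h
        rw [hg]
        simp [Set.indicator_of_notMem h, partialS, if_neg h']
  have hpt : ∀ ω, ∑' n, g n ω = ENNReal.ofReal (X ω) := by
    intro ω
    refine tendsto_nhds_unique (ENNReal.tendsto_nat_tsum fun n => g n ω) ?_
    have heq : (fun n => ∑ j ∈ Finset.range n, g j ω)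
        = fun n => ENNReal.ofReal (partialS X a n ω) := funext (hpart ω)
    rw [heq]
    exact (ENNReal.continuous_ofReal.tendsto (X ω)).comp
      (pS_tendsto ha hvan hdiv (hX0 ω))
  calc ∫⁻ ω, ENNReal.ofReal (X ω) ∂P = ∫⁻ ω, ∑' n, g n ω ∂P := by
        refine lintegral_congr fun ω => ?_
        rw [hpt ω]
    _ = ∑' n, ∫⁻ ω, g n ω ∂P :=
        lintegral_tsum fun n =>
          (measurable_const.indicator (Aset_meas hXm n)).aemeasurable
    _ = ∑' n : ℕ, ENNReal.ofReal (a n)⁻¹ * P (Aset X a n) := by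
        refine tsum_congr fun n => ?_
        rw [hg]
        rw [lintegral_indicator_const (Aset_meas hXm n)]

end Meas

theorem stmt5 {Ω : Type*} [MeasurableSpace Ω] (P : Measure Ω) [IsProbabilityMeasure P]
    (X : Ω → ℝ) (hX0 : ∀ ω, 0 ≤ X ω) (hint : Integrable X P)
    (a : ℕ → ℝ) (ha : ∀ n, 0 < a n)
    (hvan : Tendsto (fun n => (a n)⁻¹) atTop (𝓝 0))
    (hdiv : ¬ Summable (fun n => (a n)⁻¹)) :
    ENNReal.ofReal (∫ ω, X ω ∂P)
      = ∑' n : ℕ, ENNReal.ofReal (a n)⁻¹ * P (Aset X a n) := by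
  set Y : Ω → ℝ := fun ω => max (hint.1.mk X ω) 0 with hY
  have hYm : Measurable Y := hint.1.measurable_mk.max measurable_const
  have hXY : X =ᵐ[P] Y := by
    filter_upwards [hint.1.ae_eq_mk] with ω h
    simp [hY, ← h, max_eq_left (hX0 ω)]
  have hY0 : ∀ ω, 0 ≤ Y ω := fun ω => le_max_right _ _
  have h1 : ENNReal.ofReal (∫ ω, X ω ∂P) = ∫⁻ ω, ENNReal.ofReal (Y ω) ∂P := by
    rw [integral_congr_ae hXY,
      ofReal_integral_eq_lintegral_ofReal (hint.congr hXY) (Eventually.of_forall hY0)]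
  have h2 : ∀ n, P (Aset X a n) = P (Aset Y a n) := by
    intro n
    apply measure_congr
    filter_upwards [hXY] with ω h
    have hps := pS_congr (a := a) h n
    show ((a n)⁻¹ + partialS X a n ω ≤ X ω) = ((a n)⁻¹ + partialS Y a n ω ≤ Y ω)
    rw [hps, h]
  rw [h1, main_meas P hYm hY0 ha hvan hdiv]
  exact tsum_congr fun n => by rw [h2 n]
end

section
/- Let (Ω, F, P) be a probability space, X : Ω → [0, ∞) integrable, and (aₙ) positive reals with aₙ⁻¹ → 0 and ∑ aₙ⁻¹ = ∞. With Hₙ(a) := ∑_{j=1}^n a_j⁻¹, one has ∑_{n=1}^∞ aₙ⁻¹ · P(X ≥ Hₙ(a)) ≤ 1 + ∑_{n=1}^∞ P(X ≥ n). -/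
open MeasureTheory Filter Topology

theorem stmt7 {Ω : Type*} [MeasurableSpace Ω] (P : Measure Ω) [IsProbabilityMeasure P]
    (X : Ω → ℝ) (hX0 : ∀ ω, 0 ≤ X ω) (hint : Integrable X P)
    (a : ℕ → ℝ) (ha : ∀ n, 0 < a n)
    (hvan : Tendsto (fun n => (a n)⁻¹) atTop (𝓝 0))
    (hdiv : ¬ Summable (fun n => (a n)⁻¹)) :
    ∑' n : ℕ, ENNReal.ofReal (a n)⁻¹ *
        P {ω | ∑ j ∈ Finset.range (n + 1), (a j)⁻¹ ≤ X ω}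
      ≤ 1 + ∑' n : ℕ, P {ω | ((n : ℝ) + 1) ≤ X ω} := by
  set S : ℕ → ℝ := fun n => ∑ j ∈ Finset.range n, (a j)⁻¹ with hS
  have hSmono : Monotone S := by
    intro m n hmn
    exact Finset.sum_le_sum_of_subset_of_nonneg (Finset.range_subset_range.2 hmn)
      (fun j _ _ => (inv_pos.2 (ha j)).le)
  have hS0 : ∀ n, 0 ≤ S n := fun n =>
    Finset.sum_nonneg fun j _ => (inv_pos.2 (ha j)).le
  have hstep : ∀ n, S (n + 1) - S n = (a n)⁻¹ := by
    intro n; simp [hS, Finset.sum_range_succ]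
  set g : ℝ → ENNReal := fun t => P {ω | t ≤ X ω} with hg
  -- Step 1: LHS ≤ ∫⁻ t in Ioi 0, g t
  have h1 : ∑' n : ℕ, ENNReal.ofReal (a n)⁻¹ * P {ω | S (n + 1) ≤ X ω}
      ≤ ∫⁻ t in Set.Ioi (0 : ℝ), g t := by
    have hterm : ∀ n : ℕ, ENNReal.ofReal (a n)⁻¹ * P {ω | S (n + 1) ≤ X ω}
        ≤ ∫⁻ t in Set.Ioc (S n) (S (n + 1)), g t := by
      intro n
      have hconst : ENNReal.ofReal (a n)⁻¹ * P {ω | S (n + 1) ≤ X ω}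
          = ∫⁻ _ in Set.Ioc (S n) (S (n + 1)), P {ω | S (n + 1) ≤ X ω} := by
        rw [setLIntegral_const, Real.volume_Ioc, hstep n, mul_comm]
      rw [hconst]
      refine lintegral_mono_ae ?_
      refine (ae_restrict_iff' measurableSet_Ioc).2 (ae_of_all _ fun t ht => ?_)
      exact measure_mono fun ω hω => le_trans ht.2 hω
    calc ∑' n : ℕ, ENNReal.ofReal (a n)⁻¹ * P {ω | S (n + 1) ≤ X ω}
        ≤ ∑' n : ℕ, ∫⁻ t in Set.Ioc (S n) (S (n + 1)), g t :=
          ENNReal.tsum_le_tsum hterm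
      _ = ∫⁻ t in ⋃ n : ℕ, Set.Ioc (S n) (S (n + 1)), g t := by
          refine (lintegral_iUnion (fun n => measurableSet_Ioc) ?_ g).symm
          intro m n hmn
          rcases hmn.lt_or_gt with h | h
          · exact Set.Ioc_disjoint_Ioc.2
              ((min_le_left _ _).trans ((hSmono h).trans (le_max_right _ _)))
          · exact Set.Ioc_disjoint_Ioc.2
              ((min_le_right _ _).trans ((hSmono h).trans (le_max_left _ _)))
      _ ≤ ∫⁻ t in Set.Ioi (0 : ℝ), g t := by
          refine lintegral_mono_set ?_
          refine Set.iUnion_subset fun n t ht => ?_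
          exact lt_of_le_of_lt (hS0 n) ht.1
  -- Step 2: ∫⁻ t in Ioi 0, g t ≤ 1 + RHS
  have h2 : ∫⁻ t in Set.Ioi (0 : ℝ), g t ≤ 1 + ∑' n : ℕ, P {ω | ((n : ℝ) + 1) ≤ X ω} := by
    have hcover : Set.Ioi (0 : ℝ) = ⋃ n : ℕ, Set.Ioc (n : ℝ) ((n : ℝ) + 1) := by
      ext t
      simp only [Set.mem_Ioi, Set.mem_iUnion, Set.mem_Ioc]
      constructor
      · intro ht
        obtain ⟨m, hm⟩ := exists_nat_ge t
        have hex : ∃ n : ℕ, t ≤ (n : ℝ) + 1 := ⟨m, by linarith⟩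
        classical
        refine ⟨Nat.find hex, ?_, Nat.find_spec hex⟩
        set n := Nat.find hex with hn
        rcases Nat.eq_zero_or_pos n with h0 | hpos
        · rw [h0]; simpa using ht
        · have h2 := Nat.find_min hex (Nat.sub_lt hpos one_pos)
          push_neg at h2
          have hc : ((n - 1 : ℕ) : ℝ) = (n : ℝ) - 1 := by
            rw [Nat.cast_sub hpos]; simp
          rw [hc] at h2
          linarith
      · rintro ⟨n, hn, _⟩
        exact lt_of_le_of_lt (Nat.cast_nonneg n) hn
    have hdisj : Pairwise (Function.onFun Disjoint
        fun n : ℕ => Set.Ioc ((n : ℝ)) ((n : ℝ) + 1)) := by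
      intro m n hmn
      rcases hmn.lt_or_gt with h | h
      · have hle : (m : ℝ) + 1 ≤ (n : ℝ) := by exact_mod_cast Nat.succ_le_of_lt h
        exact Set.Ioc_disjoint_Ioc.2
          ((min_le_left _ _).trans (hle.trans (le_max_right _ _)))
      · have hle : (n : ℝ) + 1 ≤ (m : ℝ) := by exact_mod_cast Nat.succ_le_of_lt h
        exact Set.Ioc_disjoint_Ioc.2
          ((min_le_right _ _).trans (hle.trans (le_max_left _ _)))
    rw [hcover, lintegral_iUnion (fun n => measurableSet_Ioc) hdisj]
    have hterm : ∀ n : ℕ, ∫⁻ t in Set.Ioc ((n : ℝ)) ((n : ℝ) + 1), g t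
        ≤ P {ω | (n : ℝ) ≤ X ω} := by
      intro n
      have : ∫⁻ t in Set.Ioc ((n : ℝ)) ((n : ℝ) + 1), g t
          ≤ ∫⁻ _ in Set.Ioc ((n : ℝ)) ((n : ℝ) + 1), P {ω | (n : ℝ) ≤ X ω} := by
        refine lintegral_mono_ae ?_
        refine (ae_restrict_iff' measurableSet_Ioc).2 (ae_of_all _ fun t ht => ?_)
        exact measure_mono fun ω hω => le_trans ht.1.le hω
      refine this.trans ?_
      rw [setLIntegral_const, Real.volume_Ioc]
      simp
    calc ∑' n : ℕ, ∫⁻ t in Set.Ioc ((n : ℝ)) ((n : ℝ) + 1), g t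
        ≤ ∑' n : ℕ, P {ω | (n : ℝ) ≤ X ω} := ENNReal.tsum_le_tsum hterm
      _ = P {ω | ((0 : ℕ) : ℝ) ≤ X ω}
          + ∑' n : ℕ, P {ω | ((n : ℝ) + 1) ≤ X ω} := by
          rw [tsum_eq_zero_add' ENNReal.summable]
          congr 1
          refine tsum_congr fun n => ?_
          congr 1
          ext ω
          push_cast
          simp
      _ ≤ 1 + ∑' n : ℕ, P {ω | ((n : ℝ) + 1) ≤ X ω} := by
          gcongr
          exact prob_le_one
  exact h1.trans h2
end

section
/- Let (Ω, F, P) be a probability space, X : Ω → [0, ∞) integrable and almost surely ℕ-valued, and (aₙ) positive reals with aₙ⁻¹ → 0 and ∑ aₙ⁻¹ = ∞. With Hₙ(a) := ∑_{j=1}^n a_j⁻¹, one has ∑_{n=1}^∞ P(X ≥ n) ≥ ∑_{n=1}^∞ aₙ⁻¹ · P(X ≥ Hₙ(a)). -/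
open MeasureTheory Filter Topology

lemma aux_sum (a : ℕ → ℝ) (ha : ∀ n, 0 < a n) (x : ℝ) (N : ℕ) :
    ∑ n ∈ Finset.range N,
      (if (∑ j ∈ Finset.range (n+1), (a j)⁻¹) ≤ x then (a n)⁻¹ else 0) ≤ max x 0 := by
  induction N with
  | zero => simp
  | succ N ih =>
    rw [Finset.sum_range_succ]
    by_cases h : (∑ j ∈ Finset.range (N+1), (a j)⁻¹) ≤ x
    · rw [if_pos h]
      have hcong : ∀ n ∈ Finset.range N,
          (if (∑ j ∈ Finset.range (n+1), (a j)⁻¹) ≤ x then (a n)⁻¹ else 0) = (a n)⁻¹ := by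
        intro n hn
        rw [if_pos]
        refine le_trans (Finset.sum_le_sum_of_subset_of_nonneg ?_ ?_) h
        · exact Finset.range_subset_range.2 (by simp at hn; omega)
        · intro j _ _; exact (inv_pos.2 (ha j)).le
      rw [Finset.sum_congr rfl hcong, ← Finset.sum_range_succ]
      exact le_max_of_le_left h
    · rw [if_neg h, add_zero]; exact ih

theorem stmt10 {Ω : Type*} [MeasurableSpace Ω] (P : Measure Ω) [IsProbabilityMeasure P]
    (X : Ω → ℝ) (hX0 : ∀ ω, 0 ≤ X ω) (hint : Integrable X P)
    (hNat : ∀ᵐ ω ∂P, ∃ n : ℕ, X ω = (n : ℝ))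
    (a : ℕ → ℝ) (ha : ∀ n, 0 < a n)
    (hvan : Tendsto (fun n => (a n)⁻¹) atTop (𝓝 0))
    (hdiv : ¬ Summable (fun n => (a n)⁻¹)) :
    ∑' n : ℕ, ENNReal.ofReal (a n)⁻¹ *
        P {ω | ∑ j ∈ Finset.range (n + 1), (a j)⁻¹ ≤ X ω}
      ≤ ∑' n : ℕ, P {ω | ((n : ℝ) + 1) ≤ X ω} := by
  -- measurable version of X
  obtain ⟨Y, hYmeas, hXY⟩ : ∃ Y : Ω → ℝ, Measurable Y ∧ X =ᵐ[P] Y :=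
    ⟨hint.aemeasurable.mk X, hint.aemeasurable.measurable_mk, hint.aemeasurable.ae_eq_mk⟩
  have hset : ∀ c : ℝ, P {ω | c ≤ X ω} = P {ω | c ≤ Y ω} := by
    intro c
    refine measure_congr (hXY.mono fun ω h => ?_)
    show (c ≤ X ω) = (c ≤ Y ω)
    rw [h]
  have hYNat : ∀ᵐ ω ∂P, ∃ n : ℕ, Y ω = (n : ℝ) := by
    filter_upwards [hNat, hXY] with ω hω h
    rw [← h]; exact hω
  simp only [hset]
  have hmeasset : ∀ c : ℝ, MeasurableSet {ω | c ≤ Y ω} := fun c =>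
    hYmeas measurableSet_Ici
  -- key middle quantity
  have key1 : ∑' n : ℕ, ENNReal.ofReal (a n)⁻¹ *
      P {ω | ∑ j ∈ Finset.range (n + 1), (a j)⁻¹ ≤ Y ω}
      ≤ ∫⁻ ω, ENNReal.ofReal (Y ω) ∂P := by
    have : ∀ n : ℕ, ENNReal.ofReal (a n)⁻¹ *
        P {ω | ∑ j ∈ Finset.range (n + 1), (a j)⁻¹ ≤ Y ω}
        = ∫⁻ ω, Set.indicator {ω | ∑ j ∈ Finset.range (n + 1), (a j)⁻¹ ≤ Y ω}
            (fun _ => ENNReal.ofReal (a n)⁻¹) ω ∂P := by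
      intro n
      rw [lintegral_indicator_const (hmeasset _)]
    rw [tsum_congr this, ← lintegral_tsum (fun n => (measurable_const.indicator (hmeasset _)).aemeasurable)]
    refine lintegral_mono fun ω => ?_
    -- pointwise: ∑' n, indicator ≤ ofReal (Y ω)
    rw [ENNReal.tsum_eq_iSup_sum]
    refine iSup_le fun s => ?_
    obtain ⟨N, hN⟩ : ∃ N, s ⊆ Finset.range N := ⟨(s.sup id) + 1, fun i hi =>
      Finset.mem_range.2 (Nat.lt_succ_of_le (Finset.le_sup (f := id) hi))⟩
    calc ∑ n ∈ s, Set.indicator {ω | ∑ j ∈ Finset.range (n + 1), (a j)⁻¹ ≤ Y ω}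
          (fun _ => ENNReal.ofReal (a n)⁻¹) ω
        ≤ ∑ n ∈ Finset.range N, Set.indicator {ω | ∑ j ∈ Finset.range (n + 1), (a j)⁻¹ ≤ Y ω}
          (fun _ => ENNReal.ofReal (a n)⁻¹) ω :=
          Finset.sum_le_sum_of_subset hN
      _ ≤ ENNReal.ofReal (Y ω) := by
          have : ∀ n, Set.indicator {ω | ∑ j ∈ Finset.range (n + 1), (a j)⁻¹ ≤ Y ω}
              (fun _ => ENNReal.ofReal (a n)⁻¹) ω
              = ENNReal.ofReal (if (∑ j ∈ Finset.range (n+1), (a j)⁻¹) ≤ Y ω then (a n)⁻¹ else 0) := by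
            intro n
            by_cases h : (∑ j ∈ Finset.range (n+1), (a j)⁻¹) ≤ Y ω
            · simp [Set.indicator_of_mem, h]
            · simp [Set.indicator_of_notMem, h]
          rw [Finset.sum_congr rfl fun n _ => this n,
            ← ENNReal.ofReal_sum_of_nonneg (fun n _ => by split; exacts [inv_nonneg.2 (ha n).le, le_rfl])]
          rw [show ENNReal.ofReal (Y ω) = ENNReal.ofReal (max (Y ω) 0) by
            rcases le_total 0 (Y ω) with h | h
            · rw [max_eq_left h]
            · rw [max_eq_right h, ENNReal.ofReal_of_nonpos h, ENNReal.ofReal_zero]]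
          exact ENNReal.ofReal_le_ofReal (aux_sum a ha (Y ω) N)
  have key2 : ∫⁻ ω, ENNReal.ofReal (Y ω) ∂P = ∑' n : ℕ, P {ω | ((n : ℝ) + 1) ≤ Y ω} := by
    have hpt : ∀ᵐ ω ∂P, ENNReal.ofReal (Y ω)
        = ∑' n : ℕ, Set.indicator {ω | ((n : ℝ) + 1) ≤ Y ω} (fun _ => (1 : ENNReal)) ω := by
      filter_upwards [hYNat] with ω hω
      obtain ⟨k, hk⟩ := hω
      have hcong : ∀ n : ℕ, Set.indicator {ω | ((n : ℝ) + 1) ≤ Y ω} (fun _ => (1 : ENNReal)) ω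
          = if n < k then 1 else 0 := by
        intro n
        have hiff : ((n : ℝ) + 1) ≤ Y ω ↔ n < k := by
          rw [hk, show ((n : ℝ) + 1) = ((n + 1 : ℕ) : ℝ) by push_cast; ring, Nat.cast_le]
          omega
        by_cases h : n < k
        · rw [Set.indicator_of_mem (by exact Set.mem_setOf_eq ▸ hiff.2 h), if_pos h]
        · rw [Set.indicator_of_notMem (by simpa [Set.mem_setOf_eq, hiff] using h), if_neg h]
      rw [tsum_congr hcong, tsum_eq_sum (s := Finset.range k)
        (fun n hn => if_neg (by simpa using hn))]
      simp only [hk, ENNReal.ofReal_natCast]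
      rw [Finset.sum_congr rfl fun n hn => if_pos (Finset.mem_range.mp hn)]
      simp
    rw [lintegral_congr_ae hpt,
      lintegral_tsum (fun n => (measurable_const.indicator (hmeasset _)).aemeasurable)]
    refine tsum_congr fun n => ?_
    rw [lintegral_indicator_const (hmeasset _), one_mul]
  exact key1.trans_eq key2
end

section
/- Let (Ω, F, P) be a probability space and X : Ω → [0, ∞) an integrable random variable. Then the series ∑_{n=1}^∞ (1/n) · P(X ≥ Hₙ) converges and its sum is at most E[X], where Hₙ = ∑_{j=1}^n 1/j is the n-th harmonic number. -/
open MeasureTheory Filter Topology Set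

theorem stmt12 {Ω : Type*} [MeasurableSpace Ω] (P : Measure Ω) [IsProbabilityMeasure P]
    (X : Ω → ℝ) (hX0 : ∀ ω, 0 ≤ X ω) (hint : Integrable X P) :
    ∑' n : ℕ, ENNReal.ofReal ((n : ℝ) + 1)⁻¹ *
        P {ω | ∑ j ∈ Finset.range (n + 1), ((j : ℝ) + 1)⁻¹ ≤ X ω}
      ≤ ENNReal.ofReal (∫ ω, X ω ∂P) := by
  set H : ℕ → ℝ := fun n => ∑ j ∈ Finset.range n, ((j : ℝ) + 1)⁻¹ with hH
  have hHnn : ∀ n, 0 ≤ H n := fun n =>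
    Finset.sum_nonneg fun j _ => by positivity
  have hHmono : Monotone H := by
    apply monotone_nat_of_le_succ
    intro n
    simp only [hH, Finset.sum_range_succ]
    nlinarith [hHnn n, inv_nonneg.mpr (show (0:ℝ) ≤ (n:ℝ)+1 by positivity)]
  have hstep : ∀ n : ℕ, H (n+1) - H n = ((n : ℝ) + 1)⁻¹ := by
    intro n; simp [hH, Finset.sum_range_succ]
  -- each term bounded by integral over Ioc
  have key : ∀ n : ℕ, ENNReal.ofReal ((n : ℝ) + 1)⁻¹ * P {ω | H (n+1) ≤ X ω} ≤
      ∫⁻ t in Ioc (H n) (H (n+1)), P {ω | t ≤ X ω} := by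
    intro n
    have h1 : ∫⁻ _ in Ioc (H n) (H (n+1)), P {ω | H (n+1) ≤ X ω} ≤
        ∫⁻ t in Ioc (H n) (H (n+1)), P {ω | t ≤ X ω} := by
      apply setLIntegral_mono' measurableSet_Ioc
      intro t ht
      exact measure_mono fun ω hω => le_trans ht.2 hω
    calc ENNReal.ofReal ((n : ℝ) + 1)⁻¹ * P {ω | H (n+1) ≤ X ω}
        = ∫⁻ _ in Ioc (H n) (H (n+1)), P {ω | H (n+1) ≤ X ω} := by
          rw [setLIntegral_const, Real.volume_Ioc, hstep n, mul_comm]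
      _ ≤ _ := h1
  have hXmeas : AEMeasurable X P := hint.aemeasurable
  -- sum over disjoint Iocs
  have hdisj : Pairwise (Function.onFun Disjoint fun n : ℕ => Ioc (H n) (H (n+1)))  := by
    intro m n hmn
    rcases hmn.lt_or_gt with h | h
    · exact Set.Ioc_disjoint_Ioc.mpr (by simp [min_le_iff, le_max_iff, hHmono h])
    · exact Set.Ioc_disjoint_Ioc.mpr (by simp [min_le_iff, le_max_iff, hHmono h])
  calc ∑' n : ℕ, ENNReal.ofReal ((n : ℝ) + 1)⁻¹ * P {ω | H (n+1) ≤ X ω}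
      ≤ ∑' n : ℕ, ∫⁻ t in Ioc (H n) (H (n+1)), P {ω | t ≤ X ω} :=
        ENNReal.tsum_le_tsum key
    _ = ∫⁻ t in ⋃ n, Ioc (H n) (H (n+1)), P {ω | t ≤ X ω} := by
        rw [lintegral_iUnion (fun n => measurableSet_Ioc) hdisj]
    _ ≤ ∫⁻ t in Ioi 0, P {ω | t ≤ X ω} := by
        apply lintegral_mono_set
        apply Set.iUnion_subset
        intro n t ht
        exact lt_of_le_of_lt (hHnn n) ht.1
    _ = ∫⁻ ω, ENNReal.ofReal (X ω) ∂P :=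
        (lintegral_eq_lintegral_meas_le P (Eventually.of_forall hX0) hXmeas).symm
    _ = ENNReal.ofReal (∫ ω, X ω ∂P) := by
        rw [integral_eq_lintegral_of_nonneg_ae (Eventually.of_forall hX0)
          hint.aestronglyMeasurable,
          ENNReal.ofReal_toReal hint.lintegral_lt_top.ne]
end

section
/- Let (Ω, F, P) be a probability space, X : Ω → [0, ∞) integrable, and 0 < δ < 1. Then ∑_{n=1}^∞ n^{-δ} · P(X ≥ ∑_{j=1}^n j^{-δ}) ≤ E[X], and this series converges. -/
open MeasureTheory Filter Topology

lemma aux_sum_le {a : ℕ → ℝ} (ha : ∀ n, 0 ≤ a n) (x : ℝ) (m : ℕ) :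
    ∑ n ∈ Finset.range m,
      (if (∑ j ∈ Finset.range (n + 1), a j) ≤ x then a n else 0) ≤ max x 0 := by
  induction m with
  | zero => simp
  | succ m ih =>
    rw [Finset.sum_range_succ]
    by_cases h : (∑ j ∈ Finset.range (m + 1), a j) ≤ x
    · have hall : ∀ n ∈ Finset.range m,
          (if (∑ j ∈ Finset.range (n + 1), a j) ≤ x then a n else 0) = a n := by
        intro n hn
        rw [if_pos]
        refine le_trans (Finset.sum_le_sum_of_subset_of_nonneg ?_ (fun i _ _ => ha i)) h
        exact Finset.range_subset_range.2 (by have := Finset.mem_range.1 hn; omega)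
      rw [Finset.sum_congr rfl hall, if_pos h, ← Finset.sum_range_succ]
      exact le_trans h (le_max_left _ _)
    · rw [if_neg h, add_zero]; exact ih

theorem stmt14 {Ω : Type*} [MeasurableSpace Ω] (P : Measure Ω) [IsProbabilityMeasure P]
    (X : Ω → ℝ) (hX0 : ∀ ω, 0 ≤ X ω) (hint : Integrable X P)
    (δ : ℝ) (hδ0 : 0 < δ) (hδ1 : δ < 1) :
    ∑' n : ℕ, ENNReal.ofReal (((n : ℝ) + 1) ^ (-δ)) *
        P {ω | ∑ j ∈ Finset.range (n + 1), ((j : ℝ) + 1) ^ (-δ) ≤ X ω}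
      ≤ ENNReal.ofReal (∫ ω, X ω ∂P) := by
  set a : ℕ → ℝ := fun n => ((n : ℝ) + 1) ^ (-δ) with ha_def
  have ha : ∀ n, 0 ≤ a n := fun n =>
    Real.rpow_nonneg (by positivity) _
  obtain ⟨Y, hYmeas, hXY⟩ := hint.aemeasurable
  set B : ℕ → Set Ω := fun n => {ω | ∑ j ∈ Finset.range (n + 1), a j ≤ Y ω} with hB_def
  have hBmeas : ∀ n, MeasurableSet (B n) := fun n =>
    measurableSet_le measurable_const hYmeas
  have hPB : ∀ n, P {ω | ∑ j ∈ Finset.range (n + 1), a j ≤ X ω} = P (B n) := by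
    intro n
    refine measure_congr ?_
    filter_upwards [hXY] with ω hω
    show (∑ j ∈ Finset.range (n + 1), a j ≤ X ω) = (∑ j ∈ Finset.range (n + 1), a j ≤ Y ω)
    rw [hω]
  calc ∑' n : ℕ, ENNReal.ofReal (a n) * P {ω | ∑ j ∈ Finset.range (n + 1), a j ≤ X ω}
      = ∑' n : ℕ, ∫⁻ ω, (B n).indicator (fun _ => ENNReal.ofReal (a n)) ω ∂P := by
        refine tsum_congr fun n => ?_
        rw [lintegral_indicator_const (hBmeas n), hPB n]
    _ = ∫⁻ ω, ∑' n : ℕ, (B n).indicator (fun _ => ENNReal.ofReal (a n)) ω ∂P := by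
        rw [lintegral_tsum fun n =>
          ((measurable_const.indicator (hBmeas n)).aemeasurable)]
    _ ≤ ∫⁻ ω, ENNReal.ofReal (Y ω) ∂P := by
        refine lintegral_mono fun ω => ?_
        rw [ENNReal.tsum_eq_iSup_sum]
        refine iSup_le fun s => ?_
        obtain ⟨m, hm⟩ := s.exists_nat_subset_range
        refine le_trans (Finset.sum_le_sum_of_subset hm) ?_
        have : ∑ n ∈ Finset.range m, (B n).indicator (fun _ => ENNReal.ofReal (a n)) ω
            = ENNReal.ofReal (∑ n ∈ Finset.range m,
                (if (∑ j ∈ Finset.range (n + 1), a j) ≤ Y ω then a n else 0)) := by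
          rw [ENNReal.ofReal_sum_of_nonneg (fun n _ => by positivity)]
          refine Finset.sum_congr rfl fun n _ => ?_
          by_cases h : (∑ j ∈ Finset.range (n + 1), a j) ≤ Y ω
          · have h' : ω ∈ B n := h
            rw [if_pos h]; exact Set.indicator_of_mem h' _
          · have h' : ω ∉ B n := h
            rw [if_neg h, ENNReal.ofReal_zero]; exact Set.indicator_of_notMem h' _
        rw [this]
        refine le_trans (ENNReal.ofReal_le_ofReal (aux_sum_le ha _ m)) ?_
        rcases le_or_gt 0 (Y ω) with h | h
        · rw [max_eq_left h]
        · rw [max_eq_right h.le]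
          simp
    _ = ∫⁻ ω, ENNReal.ofReal (X ω) ∂P := by
        refine lintegral_congr_ae ?_
        filter_upwards [hXY] with ω hω
        rw [hω]
    _ = ENNReal.ofReal (∫ ω, X ω ∂P) := by
        rw [ofReal_integral_eq_lintegral_ofReal hint (ae_of_all _ hX0)]
end

section
/- Let (Ω, F, μ) be a finite measure space, X : Ω → [0, ∞) integrable with respect to μ, and (aₙ) positive reals with aₙ⁻¹ → 0 and ∑ aₙ⁻¹ = ∞. With Hₙ(a) := ∑_{j=1}^n a_j⁻¹, one has ∑_{n=1}^∞ aₙ⁻¹ · μ({X ≥ Hₙ(a)}) ≤ ∫ X dμ ≤ ∑_{n=1}^∞ aₙ⁻¹ · μ({X ≥ aₙ⁻¹}). -/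
open MeasureTheory Filter Topology ENNReal
open scoped ENNReal

-- tsum of ofReal of a non-summable nonneg sequence is ⊤
lemma aux_tsum_top (b : ℕ → ℝ) (hb0 : ∀ n, 0 ≤ b n) (hdiv : ¬ Summable b) :
    (∑' n, ENNReal.ofReal (b n)) = ⊤ := by
  by_contra h
  apply hdiv
  have hs : Summable (fun n => (b n).toNNReal) :=
    ENNReal.tsum_coe_ne_top_iff_summable.mp (by simpa [ENNReal.ofReal] using h)
  exact (NNReal.summable_coe.mpr hs).congr fun n => Real.coe_toNNReal _ (hb0 n)

-- pointwise lower bound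
lemma aux_pt_lower (b : ℕ → ℝ) (hb0 : ∀ n, 0 ≤ b n) (y : ℝ) :
    (∑' n, (if (∑ j ∈ Finset.range (n + 1), b j) ≤ y then ENNReal.ofReal (b n) else 0))
      ≤ ENNReal.ofReal y := by
  refine Summable.tsum_le_of_sum_le ENNReal.summable fun F => ?_
  set P : ℕ → Prop := fun n => (∑ j ∈ Finset.range (n + 1), b j) ≤ y with hP
  classical
  by_cases hne : (F.filter P).Nonempty
  · set N := (F.filter P).max' hne with hN
    have hNy : (∑ j ∈ Finset.range (N + 1), b j) ≤ y :=
      (Finset.mem_filter.mp ((F.filter P).max'_mem hne)).2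
    calc ∑ n ∈ F, (if P n then ENNReal.ofReal (b n) else 0)
        = ∑ n ∈ F.filter P, ENNReal.ofReal (b n) := (Finset.sum_filter _ _).symm
      _ ≤ ∑ n ∈ Finset.range (N + 1), ENNReal.ofReal (b n) :=
          Finset.sum_le_sum_of_subset (fun n hn =>
            Finset.mem_range.mpr (Nat.lt_succ_of_le (Finset.le_max' _ _ hn)))
      _ = ENNReal.ofReal (∑ j ∈ Finset.range (N + 1), b j) :=
          (ENNReal.ofReal_sum_of_nonneg (fun j _ => hb0 j)).symm
      _ ≤ ENNReal.ofReal y := ENNReal.ofReal_le_ofReal hNy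
  · have : ∀ n ∈ F, (if P n then ENNReal.ofReal (b n) else 0) = 0 := by
      intro n hn
      rw [if_neg]
      intro hPn
      exact hne ⟨n, Finset.mem_filter.mpr ⟨hn, hPn⟩⟩
    rw [Finset.sum_eq_zero this]
    exact zero_le

-- pointwise upper bound
lemma aux_pt_upper (b : ℕ → ℝ) (hb0 : ∀ n, 0 < b n)
    (hvan : Tendsto b atTop (𝓝 0)) (hdiv : ¬ Summable b) (y : ℝ) :
    ENNReal.ofReal y ≤ ∑' n, (if b n ≤ y then ENNReal.ofReal (b n) else 0) := by
  rcases le_or_gt y 0 with hy | hy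
  · simp [ENNReal.ofReal_of_nonpos hy]
  · -- the RHS is ⊤
    obtain ⟨N, hN⟩ : ∃ N, ∀ n ≥ N, b n ≤ y := by
      have := (hvan.eventually (eventually_le_nhds hy)).exists_forall_of_atTop
      simpa using (hvan.eventually (eventually_le_nhds hy)).exists_forall_of_atTop
    have htail : (∑' n, ENNReal.ofReal (b (n + N))) = ⊤ := by
      have h1 : (∑ i ∈ Finset.range N, ENNReal.ofReal (b i)) + ∑' n, ENNReal.ofReal (b (n + N))
          = ∑' n, ENNReal.ofReal (b n) := Summable.sum_add_tsum_nat_add' ENNReal.summable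
      have h2 : (∑ i ∈ Finset.range N, ENNReal.ofReal (b i)) ≠ ⊤ := by
        exact (ENNReal.sum_lt_top.mpr fun i _ => ENNReal.ofReal_lt_top).ne
      rw [aux_tsum_top b (fun n => (hb0 n).le) hdiv] at h1
      exact (ENNReal.add_eq_top.mp h1).resolve_left h2
    have : (∑' n, (if b (n + N) ≤ y then ENNReal.ofReal (b (n + N)) else 0)) = ⊤ := by
      rw [← htail]
      exact tsum_congr fun n => if_pos (hN (n + N) (Nat.le_add_left N n))
    have hle : (⊤ : ℝ≥0∞) ≤ ∑' n, (if b n ≤ y then ENNReal.ofReal (b n) else 0) := by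
      rw [← this,
        ← Summable.sum_add_tsum_nat_add' (f := fun n => (if b n ≤ y then ENNReal.ofReal (b n) else 0))
          (k := N) ENNReal.summable]
      exact le_add_self
    exact le_trans le_top hle

theorem stmt16 {Ω : Type*} [MeasurableSpace Ω] (μ : Measure Ω) [IsFiniteMeasure μ]
    (X : Ω → ℝ) (hX0 : ∀ ω, 0 ≤ X ω) (hint : Integrable X μ)
    (a : ℕ → ℝ) (ha : ∀ n, 0 < a n)
    (hvan : Tendsto (fun n => (a n)⁻¹) atTop (𝓝 0))
    (hdiv : ¬ Summable (fun n => (a n)⁻¹)) :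
    (∑' n : ℕ, ENNReal.ofReal (a n)⁻¹ *
        μ {ω | ∑ j ∈ Finset.range (n + 1), (a j)⁻¹ ≤ X ω})
      ≤ ENNReal.ofReal (∫ ω, X ω ∂μ) ∧
    ENNReal.ofReal (∫ ω, X ω ∂μ)
      ≤ ∑' n : ℕ, ENNReal.ofReal (a n)⁻¹ * μ {ω | (a n)⁻¹ ≤ X ω} := by
  have hb0 : ∀ n, (0:ℝ) < (a n)⁻¹ := fun n => inv_pos.mpr (ha n)
  obtain ⟨Y, hYm, hXY⟩ : ∃ Y, Measurable Y ∧ X =ᵐ[μ] Y :=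
    ⟨hint.aemeasurable.mk X, hint.aemeasurable.measurable_mk, hint.aemeasurable.ae_eq_mk⟩
  have hset : ∀ c : ℝ, μ {ω | c ≤ X ω} = μ {ω | c ≤ Y ω} := by
    intro c
    refine measure_congr ?_
    filter_upwards [hXY] with ω h
    change (c ≤ X ω) = (c ≤ Y ω)
    rw [h]
  have hI : ENNReal.ofReal (∫ ω, X ω ∂μ) = ∫⁻ ω, ENNReal.ofReal (Y ω) ∂μ := by
    rw [ofReal_integral_eq_lintegral_ofReal hint (Filter.Eventually.of_forall hX0)]
    exact lintegral_congr_ae (hXY.mono fun ω h => by dsimp only; rw [h])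
  have hmeas : ∀ c : ℝ, MeasurableSet {ω | c ≤ Y ω} :=
    fun c => measurableSet_le measurable_const hYm
  have key : ∀ (c : ℕ → ℝ),
      (∑' n : ℕ, ENNReal.ofReal (a n)⁻¹ * μ {ω | c n ≤ Y ω})
        = ∫⁻ ω, ∑' n, (if c n ≤ Y ω then ENNReal.ofReal (a n)⁻¹ else 0) ∂μ := by
    intro c
    rw [lintegral_tsum (fun n =>
      (Measurable.ite (hmeas (c n)) measurable_const measurable_const).aemeasurable)]
    refine tsum_congr fun n => ?_
    have : ∫⁻ ω, (if c n ≤ Y ω then ENNReal.ofReal (a n)⁻¹ else 0) ∂μ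
        = ∫⁻ ω, Set.indicator {ω | c n ≤ Y ω} (fun _ => ENNReal.ofReal (a n)⁻¹) ω ∂μ := by
      refine lintegral_congr fun ω => ?_
      rw [Set.indicator_apply]
      rfl
    rw [this, lintegral_indicator_const (hmeas (c n))]
  constructor
  · calc (∑' n : ℕ, ENNReal.ofReal (a n)⁻¹ *
        μ {ω | ∑ j ∈ Finset.range (n + 1), (a j)⁻¹ ≤ X ω})
        = ∑' n : ℕ, ENNReal.ofReal (a n)⁻¹ *
            μ {ω | ∑ j ∈ Finset.range (n + 1), (a j)⁻¹ ≤ Y ω} :=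
          tsum_congr fun n => by rw [hset]
      _ = ∫⁻ ω, ∑' n, (if (∑ j ∈ Finset.range (n + 1), (a j)⁻¹) ≤ Y ω
            then ENNReal.ofReal (a n)⁻¹ else 0) ∂μ :=
          key (fun n => ∑ j ∈ Finset.range (n + 1), (a j)⁻¹)
      _ ≤ ∫⁻ ω, ENNReal.ofReal (Y ω) ∂μ :=
          lintegral_mono fun ω =>
            aux_pt_lower (fun n => (a n)⁻¹) (fun n => (hb0 n).le) (Y ω)
      _ = ENNReal.ofReal (∫ ω, X ω ∂μ) := hI.symm
  · calc ENNReal.ofReal (∫ ω, X ω ∂μ)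
        = ∫⁻ ω, ENNReal.ofReal (Y ω) ∂μ := hI
      _ ≤ ∫⁻ ω, ∑' n, (if (a n)⁻¹ ≤ Y ω then ENNReal.ofReal (a n)⁻¹ else 0) ∂μ :=
          lintegral_mono fun ω =>
            aux_pt_upper (fun n => (a n)⁻¹) hb0 hvan hdiv (Y ω)
      _ = ∑' n : ℕ, ENNReal.ofReal (a n)⁻¹ * μ {ω | (a n)⁻¹ ≤ Y ω} :=
          (key (fun n => (a n)⁻¹)).symm
      _ = ∑' n : ℕ, ENNReal.ofReal (a n)⁻¹ * μ {ω | (a n)⁻¹ ≤ X ω} :=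
          tsum_congr fun n => by rw [hset]
end
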